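/- For every h₁ > 0 there exists δ > 0, depending only on h₁ (one may take δ = tanh(4h₁/5)/4), such that for all real h ≥ h₁, all m ∈ ℝ with |m| ≥ 1/2, and all ξ ≥ 4/5, the derivative with respect to ξ of the dispersion symbol ξ ↦ m·(ξ·tanh(h·ξ))^{1/2} satisfies | d/dξ ( m·(ξ·tanh(h·ξ))^{1/2} ) | ≥ δ·ξ^{−1/2}. -/

import Mathlib

private lemma tanh_pos' {x : ℝ} (hx : 0 < x) : 0 < Real.tanh x := by
  rw [Real.tanh_eq_sinh_div_cosh]
  exact div_pos (Real.sinh_pos_iff.2 hx) (Real.cosh_pos x)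

private lemma tanh_le_one' (x : ℝ) : Real.tanh x ≤ 1 := by
  rw [Real.tanh_eq_sinh_div_cosh]
  exact (div_le_one (Real.cosh_pos x)).2 (Real.sinh_lt_cosh x).le

private lemma tanh_mono' {x y : ℝ} (hxy : x ≤ y) : Real.tanh x ≤ Real.tanh y := by
  rw [Real.tanh_eq_sinh_div_cosh, Real.tanh_eq_sinh_div_cosh,
    div_le_div_iff₀ (Real.cosh_pos x) (Real.cosh_pos y)]
  have h1 : Real.sinh (x - y) ≤ 0 := Real.sinh_nonpos_iff.2 (by linarith)
  rw [Real.sinh_sub] at h1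
  linarith

private lemma hasDerivAt_tanh_comp (h x : ℝ) :
    HasDerivAt (fun s : ℝ => Real.tanh (h * s)) (h / Real.cosh (h * x) ^ 2) x := by
  have hm : HasDerivAt (fun s : ℝ => h * s) h x := by
    simpa using (hasDerivAt_id x).const_mul h
  have hs : HasDerivAt (fun s : ℝ => Real.sinh (h * s)) (Real.cosh (h * x) * h) x :=
    (Real.hasDerivAt_sinh (h * x)).comp x hm
  have hc : HasDerivAt (fun s : ℝ => Real.cosh (h * s)) (Real.sinh (h * x) * h) x :=
    (Real.hasDerivAt_cosh (h * x)).comp x hm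
  have := hs.div hc (Real.cosh_pos (h * x)).ne'
  have heq : (Real.cosh (h * x) * h * Real.cosh (h * x) -
      Real.sinh (h * x) * (Real.sinh (h * x) * h)) / Real.cosh (h * x) ^ 2
      = h / Real.cosh (h * x) ^ 2 := by
    have := Real.cosh_sq_sub_sinh_sq (h * x)
    field_simp
    linear_combination h * this
  rw [heq] at this
  have hfun : (fun s : ℝ => Real.tanh (h * s))
      = fun s : ℝ => Real.sinh (h * s) / Real.cosh (h * s) :=
    funext fun s => Real.tanh_eq_sinh_div_cosh (h * s)
  rw [hfun]
  exact this

/-- Lower bound for the ξ-derivative of the dispersion symbol: there is δ > 0, depending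
only on h₁, such that for all h ≥ h₁, |m| ≥ 1/2 and ξ ≥ 4/5,
|d/dξ (m (ξ tanh(h ξ))^{1/2})| ≥ δ ξ^{−1/2}. -/
theorem dispersion_symbol_derivative_lower_bound (h₁ : ℝ) (hh₁ : 0 < h₁) :
    ∃ δ : ℝ, 0 < δ ∧ ∀ h : ℝ, h₁ ≤ h → ∀ m : ℝ, 1 / 2 ≤ |m| → ∀ ξ : ℝ, 4 / 5 ≤ ξ →
      δ * ξ ^ (-(1 / 2) : ℝ) ≤
        |deriv (fun s : ℝ => m * Real.sqrt (s * Real.tanh (h * s))) ξ| := by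
  refine ⟨Real.tanh (4 * h₁ / 5) / 4, div_pos (tanh_pos' (by linarith)) four_pos, ?_⟩
  intro h hh m hm ξ hξ
  have hξ0 : 0 < ξ := by linarith
  have h0 : 0 < h := lt_of_lt_of_le hh₁ hh
  have hhx : 0 < h * ξ := mul_pos h0 hξ0
  have ht0 : 0 < Real.tanh (h * ξ) := tanh_pos' hhx
  have hg0 : 0 < ξ * Real.tanh (h * ξ) := mul_pos hξ0 ht0
  set D : ℝ := Real.tanh (h * ξ) + ξ * (h / Real.cosh (h * ξ) ^ 2) with hD
  have hgd : HasDerivAt (fun s : ℝ => s * Real.tanh (h * s)) D ξ := by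
    have := (hasDerivAt_id' ξ).fun_mul (hasDerivAt_tanh_comp h ξ)
    simpa [hD, mul_comm] using this
  have hsq : HasDerivAt (fun s : ℝ => Real.sqrt (s * Real.tanh (h * s)))
      (D / (2 * Real.sqrt (ξ * Real.tanh (h * ξ)))) ξ := by
    have h2 := (Real.hasDerivAt_sqrt hg0.ne').comp ξ hgd
    rw [div_eq_inv_mul, ← one_div]
    exact h2
  have hf : HasDerivAt (fun s : ℝ => m * Real.sqrt (s * Real.tanh (h * s)))
      (m * (D / (2 * Real.sqrt (ξ * Real.tanh (h * ξ))))) ξ := hsq.const_mul m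
  rw [hf.deriv]
  set T : ℝ := Real.tanh (4 * h₁ / 5) with hT
  have hT0 : 0 < T := tanh_pos' (by linarith)
  have hTD : T ≤ D := by
    have h1 : 4 * h₁ / 5 ≤ h * ξ := by nlinarith
    have h2 : T ≤ Real.tanh (h * ξ) := tanh_mono' h1
    have h3 : 0 ≤ ξ * (h / Real.cosh (h * ξ) ^ 2) := by positivity
    rw [hD]; linarith
  have hsg : 0 < Real.sqrt (ξ * Real.tanh (h * ξ)) := Real.sqrt_pos.2 hg0
  have hsx : 0 < Real.sqrt ξ := Real.sqrt_pos.2 hξ0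
  have hle : Real.sqrt (ξ * Real.tanh (h * ξ)) ≤ Real.sqrt ξ := by
    apply Real.sqrt_le_sqrt
    nlinarith [tanh_le_one' (h * ξ)]
  have key : T / (2 * Real.sqrt ξ) ≤ D / (2 * Real.sqrt (ξ * Real.tanh (h * ξ))) :=
    div_le_div₀ (by linarith) hTD (by linarith) (by linarith)
  have hmul : 1 / 2 * (T / (2 * Real.sqrt ξ))
      ≤ |m| * (D / (2 * Real.sqrt (ξ * Real.tanh (h * ξ)))) :=
    mul_le_mul hm key (by positivity) (abs_nonneg m)
  have habs : |m * (D / (2 * Real.sqrt (ξ * Real.tanh (h * ξ))))|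
      = |m| * (D / (2 * Real.sqrt (ξ * Real.tanh (h * ξ)))) := by
    have hD0 : 0 < D := lt_of_lt_of_le hT0 hTD
    rw [abs_mul, abs_of_pos (div_pos hD0 (by positivity))]
  rw [habs]
  have hrw : ξ ^ (-(1 / 2) : ℝ) = (Real.sqrt ξ)⁻¹ := by
    rw [Real.rpow_neg hξ0.le, ← Real.sqrt_eq_rpow]
  rw [hrw]
  have : T / 4 * (Real.sqrt ξ)⁻¹ = 1 / 2 * (T / (2 * Real.sqrt ξ)) := by
    rw [div_mul_eq_mul_div, mul_comm (1/2), div_mul_div_comm]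
    ring_nf
  linarith
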